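/- Let M = K(a,b,b,b) be a Jukes-Cantor Markov matrix (so a, b ≥ 0 and a + 3b = 1), and set x := a − b. Then M is embeddable (there exists a rate matrix Q with exp(Q) = M) if and only if x > 0; moreover, if x > 0 then M is JC-embeddable: the Jukes-Cantor matrix Q = K((3/4)·log x, −(1/4)·log x, −(1/4)·log x, −(1/4)·log x) is a rate matrix with exp(Q) = M. -/

import Mathlib

/-- The Kimura 3ST matrix `K(a,b,c,d)`. -/
def K {α : Type*} (a b c d : α) : Matrix (Fin 4) (Fin 4) α :=
  !![a, b, c, d;
     b, a, d, c;
     c, d, a, b;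
     d, c, b, a]

/-- A rate matrix: nonnegative off-diagonal entries, rows sum to 0. -/
def IsRate {k : ℕ} (Q : Matrix (Fin k) (Fin k) ℝ) : Prop :=
  (∀ i j, i ≠ j → 0 ≤ Q i j) ∧ ∀ i, ∑ j, Q i j = 0

/-- A Jukes-Cantor Markov matrix `K(a,b,b,b)` is embeddable iff its eigenvalue
`x = a - b` is positive; and in that case it is JC-embeddable, with generator
`K((3/4)·log x, −(1/4)·log x, −(1/4)·log x, −(1/4)·log x)`. -/
private noncomputable def Pm : Matrix (Fin 4) (Fin 4) ℝ :=
  !![1,1,1,1; 1,1,-1,-1; 1,-1,1,-1; 1,-1,-1,1]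

private noncomputable def Bm : Matrix (Fin 4) (Fin 4) ℝ :=
  !![1/4,1/4,1/4,1/4; 1/4,1/4,-1/4,-1/4; 1/4,-1/4,1/4,-1/4; 1/4,-1/4,-1/4,1/4]

private noncomputable def Dm (u v : ℝ) : Matrix (Fin 4) (Fin 4) ℝ :=
  !![u,0,0,0; 0,v,0,0; 0,0,v,0; 0,0,0,v]

private lemma Dm_eq (u v : ℝ) : Matrix.diagonal ![u, v, v, v] = Dm u v := by
  ext i j
  fin_cases i <;> fin_cases j <;>
    simp [Dm, Matrix.diagonal, Matrix.vecHead, Matrix.vecTail]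

private lemma hPBm : Pm * Bm = 1 := by
  ext i j
  fin_cases i <;> fin_cases j <;>
    norm_num [Pm, Bm, Matrix.mul_apply, Fin.sum_univ_four, Matrix.cons_val_two, Matrix.cons_val_three, Matrix.vecHead, Matrix.vecTail, Matrix.one_apply, Fin.ext_iff]

private lemma hBPm : Bm * Pm = 1 := by
  ext i j
  fin_cases i <;> fin_cases j <;>
    norm_num [Pm, Bm, Matrix.mul_apply, Fin.sum_univ_four, Matrix.cons_val_two, Matrix.cons_val_three, Matrix.vecHead, Matrix.vecTail, Matrix.one_apply, Fin.ext_iff]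

set_option maxHeartbeats 1600000 in
private lemma conj_Dm (u v : ℝ) :
    Pm * Dm u v * Bm =
      K ((u + 3*v)/4) ((u - v)/4) ((u - v)/4) ((u - v)/4) := by
  ext i j
  fin_cases i <;> fin_cases j <;>
    (norm_num [Pm, Bm, Dm, K, Matrix.mul_apply, Fin.sum_univ_four, Matrix.cons_val_two, Matrix.cons_val_three, Matrix.vecHead,
      Matrix.vecTail]; try ring)

set_option maxHeartbeats 800000 in
theorem stmt_16 (a b : ℝ) (ha : 0 ≤ a) (hb : 0 ≤ b) (hab : a + 3 * b = 1) :
    ((∃ Q : Matrix (Fin 4) (Fin 4) ℝ, IsRate Q ∧ NormedSpace.exp Q = K a b b b) ↔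
      0 < a - b) ∧
    (0 < a - b →
      IsRate (K ((3 / 4) * Real.log (a - b)) (-(1 / 4) * Real.log (a - b))
        (-(1 / 4) * Real.log (a - b)) (-(1 / 4) * Real.log (a - b))) ∧
      NormedSpace.exp (K ((3 / 4) * Real.log (a - b)) (-(1 / 4) * Real.log (a - b))
        (-(1 / 4) * Real.log (a - b)) (-(1 / 4) * Real.log (a - b))) = K a b b b) := by
  have key : 0 < a - b →
      IsRate (K ((3 / 4) * Real.log (a - b)) (-(1 / 4) * Real.log (a - b))
        (-(1 / 4) * Real.log (a - b)) (-(1 / 4) * Real.log (a - b))) ∧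
      NormedSpace.exp (K ((3 / 4) * Real.log (a - b)) (-(1 / 4) * Real.log (a - b))
        (-(1 / 4) * Real.log (a - b)) (-(1 / 4) * Real.log (a - b))) = K a b b b := by
    intro hx
    set L : ℝ := Real.log (a - b) with hL
    have hx1 : a - b ≤ 1 := by linarith
    have hLle : L ≤ 0 := Real.log_nonpos (by linarith) hx1
    have hexpL : Real.exp L = a - b := Real.exp_log hx
    constructor
    · constructor
      · intro i j hij
        fin_cases i <;> fin_cases j <;> simp_all [K, Matrix.vecHead, Matrix.vecTail] <;> linarith
      · intro i
        fin_cases i <;> simp [K, Fin.sum_univ_four] <;> ring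
    · -- diagonalization
      have hU : IsUnit Pm := ⟨⟨Pm, Bm, hPBm, hBPm⟩, rfl⟩
      have hPinv : Pm⁻¹ = Bm := Matrix.inv_eq_right_inv hPBm
      have hQ : K ((3 / 4) * L) (-(1 / 4) * L) (-(1 / 4) * L) (-(1 / 4) * L)
          = Pm * Matrix.diagonal ![0, L, L, L] * Pm⁻¹ := by
        rw [hPinv, Dm_eq, conj_Dm]
        congr 1 <;> ring
      rw [hQ, Matrix.exp_conj _ _ hU, Matrix.exp_diagonal, hPinv]
      have hdiag : NormedSpace.exp ![(0:ℝ), L, L, L] = ![1, a - b, a - b, a - b] := by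
        funext i
        rw [Pi.coe_exp]
        fin_cases i <;>
          simp [← Real.exp_eq_exp_ℝ, hexpL]
      rw [hdiag, Dm_eq, conj_Dm]
      have e1 : (1 + 3*(a-b))/4 = a := by linarith
      have e2 : (1 - (a-b))/4 = b := by linarith
      rw [e1, e2]
  refine ⟨⟨?_, fun hx => ⟨_, (key hx).1, (key hx).2⟩⟩, key⟩
  rintro ⟨Q, _, hQexp⟩
  have h2 : Q = (2 : ℕ) • ((2:ℝ)⁻¹ • Q) := by
    ext i j; simp [Matrix.smul_apply]
  have hsq : NormedSpace.exp Q = (NormedSpace.exp ((2:ℝ)⁻¹ • Q)) ^ 2 := by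
    conv_lhs => rw [h2]
    exact Matrix.exp_nsmul 2 _
  have hdet : (K a b b b).det = (a - b) ^ 3 := by
    have ha' : a = 1 - 3 * b := by linarith
    subst ha'
    simp [K, Matrix.det_succ_row_zero, Fin.sum_univ_succ, Matrix.vecHead, Matrix.vecTail,
      Fin.succAbove, Matrix.submatrix, Fin.castSucc, Fin.castAdd, Fin.castLE]
    ring
  have hne : (NormedSpace.exp ((2:ℝ)⁻¹ • Q)).det ≠ 0 := by
    have := (Matrix.isUnit_iff_isUnit_det _).mp (Matrix.isUnit_exp ((2:ℝ)⁻¹ • Q))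
    exact this.ne_zero
  have hpos : 0 < (a - b) ^ 3 := by
    rw [← hdet, ← hQexp, hsq, Matrix.det_pow]
    have h0 : 0 ≤ (NormedSpace.exp ((2:ℝ)⁻¹ • Q)).det ^ 2 := sq_nonneg _
    rcases h0.lt_or_eq with h | h
    · exact h
    · exact absurd (pow_eq_zero_iff two_ne_zero |>.mp h.symm) hne
  nlinarith [sq_nonneg (a - b)]
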